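/- For m=0, M=1, the gradient of B is given by ∂B/∂x₁ = -x₁/(a[1-2a(1-x₃)]), ∂B/∂x₂ = 1/(2a(1-2a)), and ∂B/∂x₃ = x₁²/[1-2a(1-x₃)]², where a = a(x) is the implicit root of the cubic equation. -/

import Mathlib

/-- For m=0, M=1, the gradient of B is given by
∂B/∂x₁ = -x₁/(a[1-2a(1-x₃)]), ∂B/∂x₂ = 1/(2a(1-2a)), ∂B/∂x₃ = x₁²/[1-2a(1-x₃)]²,
where a = a(x) is the implicit root of the cubic equation. -/
theorem stmt10 (x₁ x₂ x₃ d₁ d₂ d₃ : ℝ)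
    (hx1 : 0 < x₁^2) (hx12 : x₁^2 < x₂) (hx3 : 0 < x₃) (hx3' : x₃ < 1)
    (a : ℝ → ℝ → ℝ → ℝ)
    (haI : ∀ y₁ y₂ y₃ : ℝ, 0 < y₁^2 → y₁^2 < y₂ → 0 < y₃ → y₃ ≤ 1 →
      a y₁ y₂ y₃ ∈ Set.Ioo (0:ℝ) (1/4))
    (ha : ∀ y₁ y₂ y₃ : ℝ, 0 < y₁^2 → y₁^2 < y₂ → 0 < y₃ → y₃ ≤ 1 →
      y₁^2/y₂ = ((1 - 2*(a y₁ y₂ y₃)*(1 - y₃))/(1 - 2*(a y₁ y₂ y₃)))^2 *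
        ((1 - 4*(a y₁ y₂ y₃))/(1 - 4*(a y₁ y₂ y₃)*(1 - y₃))))
    (hda1 : HasDerivAt (fun y => a y x₂ x₃) d₁ x₁)
    (hda2 : HasDerivAt (fun y => a x₁ y x₃) d₂ x₂)
    (hda3 : HasDerivAt (fun y => a x₁ x₂ y) d₃ x₃) :
    HasDerivAt (fun y => -y^2/(2*(a y x₂ x₃)*(1 - 2*(a y x₂ x₃)*(1 - x₃)))
        + x₂/(2*(a y x₂ x₃)*(1 - 2*(a y x₂ x₃))))
      (-x₁/((a x₁ x₂ x₃)*(1 - 2*(a x₁ x₂ x₃)*(1 - x₃)))) x₁ ∧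
    HasDerivAt (fun y => -x₁^2/(2*(a x₁ y x₃)*(1 - 2*(a x₁ y x₃)*(1 - x₃)))
        + y/(2*(a x₁ y x₃)*(1 - 2*(a x₁ y x₃))))
      (1/(2*(a x₁ x₂ x₃)*(1 - 2*(a x₁ x₂ x₃)))) x₂ ∧
    HasDerivAt (fun y => -x₁^2/(2*(a x₁ x₂ y)*(1 - 2*(a x₁ x₂ y)*(1 - y)))
        + x₂/(2*(a x₁ x₂ y)*(1 - 2*(a x₁ x₂ y))))
      (x₁^2/(1 - 2*(a x₁ x₂ x₃)*(1 - x₃))^2) x₃ := by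
  set A := a x₁ x₂ x₃ with hA
  obtain ⟨hA0, hA4⟩ := haI x₁ x₂ x₃ hx1 hx12 hx3 hx3'.le
  have hc0 : (0:ℝ) < 1 - x₃ := by linarith
  have hc1 : 1 - x₃ < 1 := by linarith
  have h1 : (0:ℝ) < 1 - 2*A := by linarith
  have h2 : (0:ℝ) < 1 - 2*A*(1-x₃) := by nlinarith
  have h3 : (0:ℝ) < 1 - 4*A := by linarith
  have h4 : (0:ℝ) < 1 - 4*A*(1-x₃) := by nlinarith
  have hx2 : (0:ℝ) < x₂ := lt_trans hx1 hx12
  have K : x₁^2 * ((1-2*A)^2 * (1-4*A*(1-x₃))) = x₂ * ((1 - 2*A*(1-x₃))^2 * (1-4*A)) := by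
    have h := ha x₁ x₂ x₃ hx1 hx12 hx3 hx3'.le
    rw [← hA] at h
    field_simp at h
    rw [eq_div_iff (by nlinarith)] at h
    linarith
  have hne1 : 2*A*(1 - 2*A*(1-x₃)) ≠ 0 := by positivity
  have hne2 : 2*A*(1 - 2*A) ≠ 0 := by positivity
  have hx2e : x₂ = x₁^2 * ((1-2*A)^2 * (1-4*A*(1-x₃))) / ((1 - 2*A*(1-x₃))^2 * (1-4*A)) := by
    rw [eq_div_iff (mul_pos (pow_pos h2 2) h3).ne']; exact K.symm
  have h2n : 1 - A*2 + A*x₃*2 ≠ 0 := by nlinarith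
  have h4n : 1 - A*4 + A*x₃*4 ≠ 0 := by nlinarith
  have h2m : 1 - A*2*(1-x₃) ≠ 0 := by nlinarith
  have h1n : 1 - A*2 ≠ 0 := by nlinarith
  have h3n : 1 - A*4 ≠ 0 := by nlinarith
  refine ⟨?_, ?_, ?_⟩
  · have h2a : HasDerivAt (fun y => 2 * a y x₂ x₃) (2*d₁) x₁ := hda1.const_mul 2
    have hv1 : HasDerivAt (fun y => 2 * a y x₂ x₃ * (1 - 2 * a y x₂ x₃ * (1 - x₃)))
        (2*d₁ * (1 - 2*A*(1-x₃)) + (2*A) * (-(2*d₁*(1-x₃)))) x₁ :=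
      h2a.mul ((h2a.mul_const (1-x₃)).const_sub 1)
    have hv2 : HasDerivAt (fun y => 2 * a y x₂ x₃ * (1 - 2 * a y x₂ x₃))
        (2*d₁ * (1 - 2*A) + (2*A) * (-(2*d₁))) x₁ :=
      h2a.mul (h2a.const_sub 1)
    have hB := ((hasDerivAt_pow 2 x₁).neg.div hv1 hne1).add
      ((hasDerivAt_const x₁ x₂).div hv2 hne2)
    refine hB.congr_deriv ?_
    rw [← hA, hx2e]
    symm
    simp only [Pi.neg_apply, id_eq, Nat.cast_ofNat]
    field_simp [show A ≠ 0 from hA0.ne', h1.ne', h2.ne', h3.ne', h4.ne', h1n, h2n, h3n, h4n, h2m]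
    ring
  · have h2a : HasDerivAt (fun y => 2 * a x₁ y x₃) (2*d₂) x₂ := hda2.const_mul 2
    have hv1 : HasDerivAt (fun y => 2 * a x₁ y x₃ * (1 - 2 * a x₁ y x₃ * (1 - x₃)))
        (2*d₂ * (1 - 2*A*(1-x₃)) + (2*A) * (-(2*d₂*(1-x₃)))) x₂ :=
      h2a.mul ((h2a.mul_const (1-x₃)).const_sub 1)
    have hv2 : HasDerivAt (fun y => 2 * a x₁ y x₃ * (1 - 2 * a x₁ y x₃))
        (2*d₂ * (1 - 2*A) + (2*A) * (-(2*d₂))) x₂ :=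
      h2a.mul (h2a.const_sub 1)
    have hB := ((hasDerivAt_const x₂ (-x₁^2)).div hv1 hne1).add
      ((hasDerivAt_id x₂).div hv2 hne2)
    refine hB.congr_deriv ?_
    rw [← hA, hx2e]
    symm
    simp only [Pi.neg_apply, id_eq, Nat.cast_ofNat]
    field_simp [show A ≠ 0 from hA0.ne', h1.ne', h2.ne', h3.ne', h4.ne', h1n, h2n, h3n, h4n, h2m]
    ring
  · have h2a : HasDerivAt (fun y => 2 * a x₁ x₂ y) (2*d₃) x₃ := hda3.const_mul 2
    have hv1 : HasDerivAt (fun y => 2 * a x₁ x₂ y * (1 - 2 * a x₁ x₂ y * (1 - y)))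
        (2*d₃ * (1 - 2*A*(1-x₃)) + (2*A) * (-(2*d₃*(1-x₃) + 2*A*(-1)))) x₃ :=
      h2a.mul ((h2a.mul ((hasDerivAt_id x₃).const_sub 1)).const_sub 1)
    have hv2 : HasDerivAt (fun y => 2 * a x₁ x₂ y * (1 - 2 * a x₁ x₂ y))
        (2*d₃ * (1 - 2*A) + (2*A) * (-(2*d₃))) x₃ :=
      h2a.mul (h2a.const_sub 1)
    have hB := ((hasDerivAt_const x₃ (-x₁^2)).div hv1 hne1).add
      ((hasDerivAt_const x₃ x₂).div hv2 hne2)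
    refine hB.congr_deriv ?_
    rw [← hA, hx2e]
    symm
    field_simp [show A ≠ 0 from hA0.ne', h1.ne', h2.ne', h3.ne', h4.ne', h1n, h2n, h3n, h4n, h2m]
    ring
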